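/- Let f : ℝ → ℝ be continuous with f(t) = 1 for t ≤ 0 and f(t) = -1 for t ≥ 1, and fix a skew-adjoint unitary F on a finite-dimensional real inner product space V (F² = -I). For ε ∈ {±1}, the ODE u' + ε f u = 0 on ℝ has a nonzero solution in L²(ℝ) if and only if ε = -1, and in that case the space of L² solutions is one-dimensional. -/

import Mathlib

open MeasureTheory

/-- For `f` continuous with `f = 1` on `(-∞,0]`, `f = -1` on `[1,∞)`, and a
skew-adjoint unitary `F` (`F² = -I`) on a finite-dimensional real inner product space `V`,
the ODE `u' + ε f u = 0` has a nonzero `L²` solution iff `ε = -1`, in which case the space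
of `L²` solutions is one-dimensional. -/
theorem stmt17 {V : Type*} [NormedAddCommGroup V] [InnerProductSpace ℝ V]
    [FiniteDimensional ℝ V]
    (F : V →ₗ[ℝ] V) (hFa : LinearMap.adjoint F = -F) (hF2 : F * F = -1)
    (f : ℝ → ℝ) (hf : Continuous f)
    (hf0 : ∀ t ≤ (0 : ℝ), f t = 1) (hf1 : ∀ t ≥ (1 : ℝ), f t = -1)
    (ε : ℝ) (hε : ε = 1 ∨ ε = -1) :
    ((∃ u : ℝ → ℝ, (∀ t, HasDerivAt u (-(ε * f t * u t)) t) ∧ MemLp u 2 volume ∧ u ≠ 0) ↔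
      ε = -1) ∧
    (ε = -1 → ∃ u₀ : ℝ → ℝ,
      (∀ t, HasDerivAt u₀ (-(ε * f t * u₀ t)) t) ∧ MemLp u₀ 2 volume ∧ u₀ ≠ 0 ∧
      ∀ u : ℝ → ℝ, (∀ t, HasDerivAt u (-(ε * f t * u t)) t) → MemLp u 2 volume →
        ∃ c : ℝ, u = c • u₀) := by
  have hfint : ∀ a b : ℝ, IntervalIntegrable f volume a b := fun a b =>
    hf.intervalIntegrable a b
  set g : ℝ → ℝ := fun t => ∫ s in (0:ℝ)..t, f s with hgdef
  have hg : ∀ t, HasDerivAt g (f t) t := fun t =>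
    intervalIntegral.integral_hasDerivAt_right (hfint 0 t)
      (hf.stronglyMeasurableAtFilter _ _) hf.continuousAt
  have hgdiff : Differentiable ℝ g := fun t => (hg t).differentiableAt
  have hgcont : Continuous g := hgdiff.continuous
  have hg0 : g 0 = 0 := intervalIntegral.integral_same
  have hgle : ∀ t ≤ (0:ℝ), g t = t := by
    intro t ht
    have h1 : g t = ∫ s in (0:ℝ)..t, (1:ℝ) := by
      apply intervalIntegral.integral_congr
      intro s hs
      rw [Set.uIcc_of_ge ht] at hs
      exact hf0 s hs.2
    simp [h1]
  have hgge : ∀ t, 1 ≤ t → g t = g 1 + 1 - t := by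
    intro t ht
    have hadd : (∫ s in (0:ℝ)..1, f s) + ∫ s in (1:ℝ)..t, f s = g t :=
      intervalIntegral.integral_add_adjacent_intervals (hfint 0 1) (hfint 1 t)
    have h2 : (∫ s in (1:ℝ)..t, f s) = ∫ s in (1:ℝ)..t, (-1:ℝ) := by
      apply intervalIntegral.integral_congr
      intro s hs
      rw [Set.uIcc_of_le ht] at hs
      exact hf1 s hs.1
    have h3 : (∫ s in (1:ℝ)..t, (-1:ℝ)) = 1 - t := by simp
    rw [← hadd, h2, h3]; ring
  set u₀ : ℝ → ℝ := fun t => Real.exp (-(ε * g t)) with hu₀def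
  have hu₀d : ∀ t, HasDerivAt u₀ (-(ε * f t * u₀ t)) t := by
    intro t
    have h1 : HasDerivAt (fun s => -(ε * g s)) (-(ε * f t)) t := ((hg t).const_mul ε).neg
    have h2 := h1.exp
    convert h2 using 1
    simp only [hu₀def]; ring
  have hu₀pos : ∀ t, 0 < u₀ t := fun t => Real.exp_pos _
  have hu₀ne : u₀ ≠ 0 := fun h => (hu₀pos 0).ne' (congrFun h 0)
  have hu₀cont : Continuous u₀ :=
    Real.continuous_exp.comp (continuous_const.mul hgcont).neg
  have huniq : ∀ u : ℝ → ℝ, (∀ t, HasDerivAt u (-(ε * f t * u t)) t) →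
      ∀ t, u t = u 0 * u₀ t := by
    intro u hu t
    have hd : ∀ s, HasDerivAt (fun x => u x * Real.exp (ε * g x)) 0 s := by
      intro s
      have h1 : HasDerivAt (fun x => Real.exp (ε * g x)) (Real.exp (ε * g s) * (ε * f s)) s :=
        ((hg s).const_mul ε).exp
      have h2 : HasDerivAt (fun x => u x * Real.exp (ε * g x)) _ s := (hu s).mul h1
      convert h2 using 1
      ring
    have hc : ∀ x y : ℝ, u x * Real.exp (ε * g x) = u y * Real.exp (ε * g y) :=
      is_const_of_deriv_eq_zero (fun s => (hd s).differentiableAt) (fun s => (hd s).deriv)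
    have h3 := hc t 0
    rw [hg0, mul_zero, Real.exp_zero, mul_one] at h3
    have h4 := congrArg (· * Real.exp (-(ε * g t))) h3
    rwa [mul_assoc, ← Real.exp_add, add_neg_cancel, Real.exp_zero, mul_one] at h4
  have hmem : ε = -1 → MemLp u₀ 2 volume := by
    intro hεm
    rw [memLp_two_iff_integrable_sq hu₀cont.aestronglyMeasurable]
    have hsq : (fun t => u₀ t ^ 2) = fun t => Real.exp (2 * g t) := by
      funext t
      simp only [hu₀def, pow_two, ← Real.exp_add, hεm]
      congr 1
      ring
    rw [hsq]
    rw [← integrableOn_univ, ← Set.Iic_union_Ioi (a := (0:ℝ)), integrableOn_union]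
    constructor
    · have h1 : IntegrableOn (fun t : ℝ => Real.exp (2 * t)) (Set.Iic 0) := by
        rw [← (Measure.measurePreserving_neg (volume : Measure ℝ)).integrableOn_comp_preimage
            (Homeomorph.neg ℝ).measurableEmbedding]
        simp only [Function.comp_def, Set.neg_preimage, Set.neg_Iic, neg_zero]
        have h2 : IntegrableOn (fun x : ℝ => Real.exp (-2 * x)) (Set.Ici 0) := by
          rw [integrableOn_Ici_iff_integrableOn_Ioi]
          exact exp_neg_integrableOn_Ioi 0 (by norm_num)
        refine h2.congr_fun (fun x _ => ?_) measurableSet_Ici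
        congr 1; ring
      refine h1.congr_fun (fun t ht => by rw [hgle t ht]) measurableSet_Iic
    · rw [← Set.Ioc_union_Ioi_eq_Ioi (zero_le_one), integrableOn_union]
      constructor
      · have h1 : IntegrableOn (fun t => Real.exp (2 * g t)) (Set.Icc (0:ℝ) 1) :=
          (Real.continuous_exp.comp (continuous_const.mul hgcont)).continuousOn.integrableOn_compact
            isCompact_Icc
        exact h1.mono_set Set.Ioc_subset_Icc_self
      · have h1 : IntegrableOn (fun t : ℝ => Real.exp (2 * g 1 + 2) * Real.exp (-2 * t))
            (Set.Ioi 1) :=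
          (exp_neg_integrableOn_Ioi 1 (by norm_num)).const_mul _
        refine h1.congr_fun (fun t ht => ?_) measurableSet_Ioi
        beta_reduce
        rw [hgge t (le_of_lt ht), ← Real.exp_add]
        congr 1; ring
  have hnot : ε = 1 → ∀ u : ℝ → ℝ, (∀ t, HasDerivAt u (-(ε * f t * u t)) t) →
      MemLp u 2 volume → u = 0 := by
    intro hε1 u hu hmemu
    by_contra hne
    have hu0 : u 0 ≠ 0 := by
      intro h0
      apply hne
      funext t
      rw [huniq u hu t, h0, zero_mul]
      rfl
    have hud : Differentiable ℝ u := fun t => (hu t).differentiableAt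
    have hcu : Continuous u := hud.continuous
    have hint : Integrable (fun t => u t ^ 2) volume :=
      (memLp_two_iff_integrable_sq hcu.aestronglyMeasurable).1 hmemu
    have hres : IntegrableOn (fun t => u t ^ 2) (Set.Ioi 1) := hint.integrableOn
    set c : ℝ := u 0 ^ 2 * Real.exp (-(2 * g 1)) with hcdef
    have hc0 : 0 < u 0 ^ 2 := lt_of_le_of_ne (sq_nonneg _) (Ne.symm (pow_ne_zero 2 hu0))
    have hcpos : 0 < c := mul_pos hc0 (Real.exp_pos _)
    have hge : ∀ t ∈ Set.Ioi (1:ℝ), c ≤ u t ^ 2 := by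
      intro t ht
      rw [huniq u hu t]
      have h2 : u₀ t ^ 2 = Real.exp (-(2 * g 1)) * Real.exp (2 * (t - 1)) := by
        show Real.exp (-(ε * g t)) ^ 2 = _
        rw [hε1, hgge t (le_of_lt ht), pow_two, ← Real.exp_add, ← Real.exp_add]
        congr 1; ring
      rw [mul_pow, h2, hcdef, ← mul_assoc]
      nth_rewrite 1 [← mul_one (u 0 ^ 2 * Real.exp (-(2 * g 1)))]
      have ht' : (1:ℝ) < t := ht
      exact mul_le_mul_of_nonneg_left (Real.one_le_exp (by linarith)) (le_of_lt hcpos)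
    have hconst : Integrable (fun _ : ℝ => c) (volume.restrict (Set.Ioi 1)) := by
      apply Integrable.mono' hres aestronglyMeasurable_const
      rw [ae_restrict_iff' measurableSet_Ioi]
      exact ae_of_all _ fun t ht => by
        rw [Real.norm_eq_abs, abs_of_pos hcpos]; exact hge t ht
    rw [integrable_const_iff] at hconst
    rcases hconst with h | h
    · exact ne_of_gt hcpos h
    · have h := h.measure_univ_lt_top
      rw [Measure.restrict_apply_univ] at h
      simp [Real.volume_Ioi] at h
  constructor
  · constructor
    · rintro ⟨u, hu, hmemu, hne⟩
      rcases hε with h1 | h1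
      · exact absurd (hnot h1 u hu hmemu) hne
      · exact h1
    · intro h1
      exact ⟨u₀, hu₀d, hmem h1, hu₀ne⟩
  · intro h1
    refine ⟨u₀, hu₀d, hmem h1, hu₀ne, fun u hu _ => ⟨u 0, funext fun t => ?_⟩⟩
    rw [huniq u hu t]
    rfl
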